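/- If m > n are coprime positive integers of opposite parity (m + n odd), then m⁴ + 14m²n² + n⁴ is not a perfect square; consequently Real.sqrt (m⁴ + 14m²n² + n⁴) is irrational. -/
import Mathlib

/-- Primitive Pythagorean triple parametrization (natural number version, odd first leg). -/
lemma pyth_nat (x y z : ℕ) (hx : 0 < x) (hy : 0 < y) (h : x ^ 2 + y ^ 2 = z ^ 2)
    (hco : Nat.Coprime x y) (hodd : x % 2 = 1) :
    ∃ r s : ℕ, 0 < s ∧ s < r ∧ Nat.Coprime r s ∧ x + s ^ 2 = r ^ 2 ∧
      y = 2 * (r * s) ∧ z = r ^ 2 + s ^ 2 := by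
  have hz : 0 < z := by
    rcases Nat.eq_zero_or_pos z with h0 | h0
    · subst h0; simp at h; omega
    · exact h0
  have pt : PythagoreanTriple (x : ℤ) (y : ℤ) (z : ℤ) := by
    have hh : (x : ℤ) ^ 2 + (y : ℤ) ^ 2 = (z : ℤ) ^ 2 := by exact_mod_cast h
    show (x : ℤ) * x + y * y = z * z
    linear_combination hh
  have hgcd : Int.gcd (x : ℤ) (y : ℤ) = 1 := by
    rwa [Int.gcd_natCast_natCast]
  have hpar : (x : ℤ) % 2 = 1 := by omega
  have hzpos : (0 : ℤ) < z := by exact_mod_cast hz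
  obtain ⟨M, N, hX, hY, hZ, hMN, -, hM0⟩ :=
    PythagoreanTriple.coprime_classification' pt hgcd hpar hzpos
  have hMNpos : 0 < M * N := by
    have h2 : (0 : ℤ) < 2 * M * N := by rw [← hY]; exact_mod_cast hy
    have h3 : 2 * M * N = 2 * (M * N) := by ring
    rw [h3] at h2
    omega
  have hNpos : 0 < N := by
    by_contra h'
    push_neg at h'
    have h4 : M * N ≤ 0 := mul_nonpos_of_nonneg_of_nonpos hM0 h'
    omega
  have hMpos : 0 < M := by
    rcases eq_or_lt_of_le hM0 with h' | h'
    · rw [← h'] at hMNpos; simp at hMNpos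
    · exact h'
  refine ⟨M.natAbs, N.natAbs, ?_, ?_, ?_, ?_, ?_, ?_⟩
  · omega
  · have hxpos : (0 : ℤ) < M ^ 2 - N ^ 2 := by rw [← hX]; exact_mod_cast hx
    have h5 : N < M := by
      by_contra h'
      push_neg at h'
      have h6 : M ^ 2 ≤ N ^ 2 := pow_le_pow_left₀ hMpos.le h' 2
      omega
    omega
  · exact hMN
  · have : (x : ℤ) + (N.natAbs : ℤ) ^ 2 = (M.natAbs : ℤ) ^ 2 := by
      rw [Int.natAbs_of_nonneg hNpos.le, Int.natAbs_of_nonneg hMpos.le, hX]; ring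
    exact_mod_cast this
  · have : (y : ℤ) = 2 * ((M.natAbs : ℤ) * (N.natAbs : ℤ)) := by
      rw [Int.natAbs_of_nonneg hNpos.le, Int.natAbs_of_nonneg hMpos.le, hY]; ring
    exact_mod_cast this
  · have : (z : ℤ) = (M.natAbs : ℤ) ^ 2 + (N.natAbs : ℤ) ^ 2 := by
      rw [Int.natAbs_of_nonneg hNpos.le, Int.natAbs_of_nonneg hMpos.le, hZ]
    exact_mod_cast this

lemma sq3 (x : ℕ) : x ^ 2 % 3 = 0 ∨ x ^ 2 % 3 = 1 := by
  have e : x ^ 2 % 3 = (x % 3) ^ 2 % 3 := Nat.pow_mod x 2 3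
  have h9 : x % 3 = 0 ∨ x % 3 = 1 ∨ x % 3 = 2 := by omega
  rcases h9 with h9 | h9 | h9 <;> rw [h9] at e <;> norm_num at e <;> simp [e]

lemma sq3' (x : ℕ) (h : x ^ 2 % 3 = 0) : 3 ∣ x := by
  have e : x ^ 2 % 3 = (x % 3) ^ 2 % 3 := Nat.pow_mod x 2 3
  have h9 : x % 3 = 0 ∨ x % 3 = 1 ∨ x % 3 = 2 := by omega
  rcases h9 with h9 | h9 | h9
  · omega
  · rw [h9, h] at e; norm_num at e
  · rw [h9, h] at e; norm_num at e

/-- The descent step: from a solution of the system with `q` even, produce a strictly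
smaller solution. -/
lemma descent_step (p q m n : ℕ) (hp : 0 < p) (hq : 0 < q) (hm : 0 < m) (hn : 0 < n)
    (hpq : Nat.Coprime p q) (hmn : Nat.Coprime m n)
    (heq : p ^ 2 + n ^ 2 = m ^ 2 + q ^ 2) (hprod : p * q = 2 * (m * n))
    (hq2 : q % 2 = 0) :
    ∃ p' q' m' n' : ℕ, 0 < p' ∧ 0 < q' ∧ 0 < m' ∧ 0 < n' ∧ Nat.Coprime p' q' ∧
      Nat.Coprime m' n' ∧ p' ^ 2 + n' ^ 2 = m' ^ 2 + q' ^ 2 ∧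
      p' * q' = 2 * (m' * n') ∧ m' * n' < m * n := by
  have hpodd : p % 2 = 1 := by
    rcases Nat.even_or_odd p with he | ho
    · exfalso
      have : 2 ∣ Nat.gcd p q := Nat.dvd_gcd (even_iff_two_dvd.mp he) (by omega)
      rw [hpq] at this; omega
    · exact Nat.odd_iff.mp ho
  obtain ⟨a, ha⟩ : ∃ a, a = Nat.gcd p m := ⟨_, rfl⟩
  have hapos : 0 < a := ha ▸ Nat.gcd_pos_of_pos_left _ hp
  obtain ⟨p₁, hp₁⟩ : a ∣ p := ha ▸ Nat.gcd_dvd_left _ _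
  obtain ⟨m₁, hm₁⟩ : a ∣ m := ha ▸ Nat.gcd_dvd_right _ _
  have hp₁pos : 0 < p₁ := Nat.pos_of_ne_zero (fun h => by simp [h] at hp₁; omega)
  have hm₁pos : 0 < m₁ := Nat.pos_of_ne_zero (fun h => by simp [h] at hm₁; omega)
  have haodd : a % 2 = 1 := by
    rcases Nat.even_or_odd a with he | ho
    · exfalso
      obtain ⟨c, hc⟩ := he
      have : 2 ∣ p := ⟨c * p₁, by rw [hp₁, hc]; ring⟩
      omega
    · exact Nat.odd_iff.mp ho
  have hcop₁ : Nat.Coprime p₁ m₁ := by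
    have h0 := Nat.coprime_div_gcd_div_gcd (m := p) (n := m) (ha ▸ hapos)
    rw [← ha] at h0
    have e1 : p / a = p₁ := by rw [hp₁, Nat.mul_div_cancel_left _ hapos]
    have e2 : m / a = m₁ := by rw [hm₁, Nat.mul_div_cancel_left _ hapos]
    rwa [e1, e2] at h0
  obtain ⟨Q, hQ⟩ : 2 ∣ q := by omega
  have hQpos : 0 < Q := by omega
  have key1 : p₁ * Q = m₁ * n := by
    have h2 : (a * p₁) * (2 * Q) = 2 * ((a * m₁) * n) := by rw [← hp₁, ← hm₁, ← hQ]; exact hprod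
    have h3 : (2 * a) * (p₁ * Q) = (2 * a) * (m₁ * n) := by
      calc (2 * a) * (p₁ * Q) = (a * p₁) * (2 * Q) := by ring
        _ = 2 * ((a * m₁) * n) := h2
        _ = (2 * a) * (m₁ * n) := by ring
    exact Nat.eq_of_mul_eq_mul_left (by omega) h3
  obtain ⟨n₁, hn₁⟩ : p₁ ∣ n := by
    have h4 : p₁ ∣ m₁ * n := ⟨Q, key1.symm⟩
    exact Nat.Coprime.dvd_of_dvd_mul_left hcop₁ h4
  have hn₁pos : 0 < n₁ := Nat.pos_of_ne_zero (fun h => by simp [h] at hn₁; omega)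
  have hQeq : Q = m₁ * n₁ := by
    have h5 : p₁ * Q = p₁ * (m₁ * n₁) := by rw [key1, hn₁]; ring
    exact Nat.eq_of_mul_eq_mul_left hp₁pos h5
  have hcopan : Nat.Coprime a n₁ := by
    have h1 : a ∣ m := ⟨m₁, hm₁⟩
    have h2 : n₁ ∣ n := ⟨p₁, by rw [hn₁]; ring⟩
    exact Nat.Coprime.coprime_dvd_right h2 (Nat.Coprime.coprime_dvd_left h1 hmn)
  -- the main polynomial identity
  have E : p₁ ^ 2 * (a ^ 2 + n₁ ^ 2) = m₁ ^ 2 * (a ^ 2 + 4 * n₁ ^ 2) := by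
    rw [hp₁, hn₁, hm₁, hQ, hQeq] at heq
    calc p₁ ^ 2 * (a ^ 2 + n₁ ^ 2) = (a * p₁) ^ 2 + (p₁ * n₁) ^ 2 := by ring
      _ = (a * m₁) ^ 2 + (2 * (m₁ * n₁)) ^ 2 := heq
      _ = m₁ ^ 2 * (a ^ 2 + 4 * n₁ ^ 2) := by ring
  obtain ⟨t, ht⟩ : m₁ ^ 2 ∣ a ^ 2 + n₁ ^ 2 := by
    have hd : m₁ ^ 2 ∣ p₁ ^ 2 * (a ^ 2 + n₁ ^ 2) := ⟨a ^ 2 + 4 * n₁ ^ 2, E⟩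
    exact (Nat.Coprime.pow 2 2 (Nat.Coprime.symm hcop₁)).dvd_of_dvd_mul_left hd
  have ht2 : a ^ 2 + 4 * n₁ ^ 2 = p₁ ^ 2 * t := by
    have h4 : m₁ ^ 2 * (p₁ ^ 2 * t) = m₁ ^ 2 * (a ^ 2 + 4 * n₁ ^ 2) := by
      calc m₁ ^ 2 * (p₁ ^ 2 * t) = p₁ ^ 2 * (m₁ ^ 2 * t) := by ring
        _ = p₁ ^ 2 * (a ^ 2 + n₁ ^ 2) := by rw [← ht]
        _ = m₁ ^ 2 * (a ^ 2 + 4 * n₁ ^ 2) := E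
    exact (Nat.eq_of_mul_eq_mul_left (by positivity) h4).symm
  have htpos : 0 < t := Nat.pos_of_ne_zero (fun h => by
    subst h
    simp at ht
    have h2 : 0 < a ^ 2 := pow_pos hapos 2
    omega)
  have ht3 : t ∣ 3 := by
    have hA : a ^ 2 + n₁ ^ 2 = m₁ ^ 2 * t := ht
    have hda : t ∣ 3 * a ^ 2 := by
      have h5 : 3 * a ^ 2 = 4 * (m₁ ^ 2 * t) - p₁ ^ 2 * t := by
        have e1 : 4 * (m₁ ^ 2 * t) = 4 * a ^ 2 + 4 * n₁ ^ 2 := by rw [← hA]; ring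
        have e2 : p₁ ^ 2 * t = a ^ 2 + 4 * n₁ ^ 2 := ht2.symm
        omega
      rw [h5]
      exact Nat.dvd_sub ⟨4 * m₁ ^ 2, by ring⟩ ⟨p₁ ^ 2, by ring⟩
    have hdn : t ∣ 3 * n₁ ^ 2 := by
      have h5 : 3 * n₁ ^ 2 = p₁ ^ 2 * t - m₁ ^ 2 * t := by
        have e1 : m₁ ^ 2 * t = a ^ 2 + n₁ ^ 2 := hA.symm
        have e2 : p₁ ^ 2 * t = a ^ 2 + 4 * n₁ ^ 2 := ht2.symm
        omega
      rw [h5]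
      exact Nat.dvd_sub ⟨p₁ ^ 2, by ring⟩ ⟨m₁ ^ 2, by ring⟩
    have h6 : t ∣ Nat.gcd (3 * a ^ 2) (3 * n₁ ^ 2) := Nat.dvd_gcd hda hdn
    rw [Nat.gcd_mul_left] at h6
    have hcp : Nat.gcd (a ^ 2) (n₁ ^ 2) = 1 := Nat.Coprime.pow 2 2 hcopan
    rw [hcp, mul_one] at h6
    exact h6
  rcases (Nat.dvd_prime Nat.prime_three).mp ht3 with rfl | rfl
  · -- t = 1 : two primitive triples, descend
    rw [mul_one] at ht ht2
    have hn₁even : n₁ % 2 = 0 := by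
      rcases Nat.even_or_odd n₁ with he | ho
      · exact Nat.even_iff.mp he
      · exfalso
        have hno : n₁ % 2 = 1 := Nat.odd_iff.mp ho
        have h6 : a ^ 2 % 4 = 1 := by
          obtain ⟨c, hc⟩ : ∃ c, a = 2 * c + 1 := ⟨a / 2, by omega⟩
          have : a ^ 2 = 4 * (c * c + c) + 1 := by rw [hc]; ring
          omega
        have h7 : n₁ ^ 2 % 4 = 1 := by
          obtain ⟨c, hc⟩ : ∃ c, n₁ = 2 * c + 1 := ⟨n₁ / 2, by omega⟩
          have : n₁ ^ 2 = 4 * (c * c + c) + 1 := by rw [hc]; ring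
          omega
        have h8 : m₁ ^ 2 % 4 = 0 ∨ m₁ ^ 2 % 4 = 1 := by
          rcases Nat.even_or_odd m₁ with he' | ho'
          · obtain ⟨c, hc⟩ := he'
            left
            have : m₁ ^ 2 = 4 * (c * c) := by rw [hc]; ring
            omega
          · right
            obtain ⟨c, hc⟩ := ho'
            have : m₁ ^ 2 = 4 * (c * c + c) + 1 := by rw [hc]; ring
            omega
        omega
    have hT1 : a ^ 2 + n₁ ^ 2 = m₁ ^ 2 := ht
    have hT2 : a ^ 2 + (2 * n₁) ^ 2 = p₁ ^ 2 := by
      calc a ^ 2 + (2 * n₁) ^ 2 = a ^ 2 + 4 * n₁ ^ 2 := by ring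
        _ = p₁ ^ 2 := by rw [ht2]
    have hcopa2n : Nat.Coprime a (2 * n₁) := by
      have h2a : Nat.Coprime a 2 := by
        rw [Nat.coprime_comm]
        exact (Nat.Prime.coprime_iff_not_dvd Nat.prime_two).mpr (by omega)
      exact Nat.Coprime.mul_right h2a hcopan
    obtain ⟨r, s, hs, hsr, hrs, hx1, hy1, hz1⟩ :=
      pyth_nat a n₁ m₁ (by omega) hn₁pos hT1 hcopan haodd
    obtain ⟨r', s', hs', hsr', hrs', hx2, hy2, hz2⟩ :=
      pyth_nat a (2 * n₁) p₁ (by omega) (by omega) hT2 hcopa2n haodd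
    refine ⟨r', s', r, s, by omega, hs', by omega, hs, hrs', hrs, ?_, ?_, ?_⟩
    · -- r'^2 + s^2 = r^2 + s'^2
      rw [← hx1, ← hx2]
      ring
    · -- r' * s' = 2 * (r * s)
      have h9 : 2 * (2 * (r * s)) = 2 * (r' * s') := by rw [← hy1]; exact hy2
      exact (Nat.eq_of_mul_eq_mul_left (by omega) h9).symm
    · -- r * s < m * n
      have h9 : n₁ = 2 * (r * s) := hy1
      have h10 : n₁ ≤ n := Nat.le_of_dvd hn ⟨p₁, by rw [hn₁]; ring⟩
      have h11 : n ≤ m * n := Nat.le_mul_of_pos_left n hm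
      have h12 : 0 < r * s := Nat.mul_pos (by omega) hs
      generalize hX : r * s = X at h9 h12 ⊢
      generalize hY : m * n = Y at h11 ⊢
      omega
  · -- t = 3 : contradiction mod 3
    exfalso
    have h3 : (a ^ 2 + n₁ ^ 2) % 3 = 0 := by rw [ht]; exact Nat.mul_mod_left _ _
    have hadd : (a ^ 2 % 3 + n₁ ^ 2 % 3) % 3 = 0 := by rw [← Nat.add_mod]; exact h3
    have h0 : a ^ 2 % 3 = 0 ∧ n₁ ^ 2 % 3 = 0 := by
      rcases sq3 a with u | u <;> rcases sq3 n₁ with v | v <;> rw [u, v] at hadd <;>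
        norm_num at hadd <;> exact ⟨u, v⟩
    obtain ⟨u, v⟩ := h0
    have h1 : Nat.gcd a n₁ = 1 := hcopan
    have h2 : (3 : ℕ) ∣ Nat.gcd a n₁ := Nat.dvd_gcd (sq3' a u) (sq3' n₁ v)
    rw [h1] at h2
    omega

/-- The system `p² - q² = m² - n²`, `pq = 2mn` has no solutions in positive coprime pairs. -/
lemma no_system : ∀ μ : ℕ, ∀ p q m n : ℕ, m * n ≤ μ → 0 < p → 0 < q → 0 < m → 0 < n →
    Nat.Coprime p q → Nat.Coprime m n →
    p ^ 2 + n ^ 2 = m ^ 2 + q ^ 2 → p * q = 2 * (m * n) → False := by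
  intro μ
  induction μ using Nat.strong_induction_on with
  | _ μ IH =>
    intro p q m n hμ hp hq hm hn hpq hmn heq hprod
    have heven : p % 2 = 0 ∨ q % 2 = 0 := by
      have : 2 ∣ p * q := ⟨m * n, hprod⟩
      rcases (Nat.Prime.dvd_mul Nat.prime_two).mp this with h | h
      · left; omega
      · right; omega
    rcases heven with hp2 | hq2
    · -- p even : apply the step to the swapped system
      obtain ⟨p', q', m', n', h1, h2, h3, h4, h5, h6, h7, h8, h9⟩ :=
        descent_step q p n m hq hp hn hm hpq.symm hmn.symm (by omega) (by
          calc q * p = p * q := by ring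
            _ = 2 * (m * n) := hprod
            _ = 2 * (n * m) := by ring) hp2
      have h10 : m' * n' < m * n := by
        have : n * m = m * n := by ring
        omega
      exact IH (m' * n') (by omega) p' q' m' n' le_rfl h1 h2 h3 h4 h5 h6 h7 h8
    · obtain ⟨p', q', m', n', h1, h2, h3, h4, h5, h6, h7, h8, h9⟩ :=
        descent_step p q m n hp hq hm hn hpq hmn heq hprod hq2
      exact IH (m' * n') (by omega) p' q' m' n' le_rfl h1 h2 h3 h4 h5 h6 h7 h8

lemma sqpar (x : ℕ) : x ^ 2 % 2 = x % 2 := by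
  rw [Nat.pow_mod]
  rcases (by omega : x % 2 = 0 ∨ x % 2 = 1) with h | h <;> rw [h] <;> norm_num

theorem d₁_irrational (m n : ℕ) (hn : 0 < n) (hmn : n < m)
    (hcop : Nat.gcd m n = 1) (hpar : (m + n) % 2 = 1) :
    (¬ ∃ k : ℕ, m ^ 4 + 14 * m ^ 2 * n ^ 2 + n ^ 4 = k ^ 2) ∧
    Irrational (Real.sqrt ((m : ℝ) ^ 4 + 14 * (m : ℝ) ^ 2 * (n : ℝ) ^ 2 + (n : ℝ) ^ 4)) := by
  have hm : 0 < m := lt_trans hn hmn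
  have hcmn : Nat.Coprime m n := hcop
  have hsqlt : n ^ 2 < m ^ 2 := Nat.pow_lt_pow_left hmn two_ne_zero
  have main : ¬ ∃ k : ℕ, m ^ 4 + 14 * m ^ 2 * n ^ 2 + n ^ 4 = k ^ 2 := by
    rintro ⟨k, hk⟩
    obtain ⟨x, hx⟩ : ∃ x, x + n ^ 2 = m ^ 2 := ⟨m ^ 2 - n ^ 2, by omega⟩
    have hx0 : 0 < x := by omega
    -- the Pythagorean equation
    have heqn : x ^ 2 + (4 * (m * n)) ^ 2 = k ^ 2 := by
      have hkz : (m : ℤ) ^ 4 + 14 * (m : ℤ) ^ 2 * (n : ℤ) ^ 2 + (n : ℤ) ^ 4 = (k : ℤ) ^ 2 := by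
        exact_mod_cast hk
      have hxz : (x : ℤ) + (n : ℤ) ^ 2 = (m : ℤ) ^ 2 := by exact_mod_cast hx
      have : (x : ℤ) ^ 2 + ((4 * (m * n) : ℕ) : ℤ) ^ 2 = ((k : ℕ) : ℤ) ^ 2 := by
        push_cast
        have hxz' : (x : ℤ) = (m : ℤ) ^ 2 - (n : ℤ) ^ 2 := by omega
        rw [hxz']
        linear_combination hkz
      exact_mod_cast this
    -- x is odd
    have hxodd : x % 2 = 1 := by
      have e1 := sqpar m
      have e2 := sqpar n
      omega
    -- coprimality
    have cxm : Nat.Coprime x m := by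
      have h1 : Nat.gcd x m ∣ m ^ 2 := dvd_pow (Nat.gcd_dvd_right x m) two_ne_zero
      have h2 : Nat.gcd x m ∣ n ^ 2 := by
        have h3 : Nat.gcd x m ∣ m ^ 2 - x := Nat.dvd_sub h1 (Nat.gcd_dvd_left x m)
        have h4 : m ^ 2 - x = n ^ 2 := by omega
        rwa [h4] at h3
      have h5 : Nat.gcd x m ∣ Nat.gcd (m ^ 2) (n ^ 2) := Nat.dvd_gcd h1 h2
      have h6 : Nat.gcd (m ^ 2) (n ^ 2) = 1 := Nat.Coprime.pow 2 2 hcmn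
      rw [h6] at h5
      exact Nat.dvd_one.mp h5
    have cxn : Nat.Coprime x n := by
      have h1 : Nat.gcd x n ∣ n ^ 2 := dvd_pow (Nat.gcd_dvd_right x n) two_ne_zero
      have h2 : Nat.gcd x n ∣ m ^ 2 := by
        have h3 : Nat.gcd x n ∣ x + n ^ 2 := Dvd.dvd.add (Nat.gcd_dvd_left x n) h1
        rwa [hx] at h3
      have h5 : Nat.gcd x n ∣ Nat.gcd (m ^ 2) (n ^ 2) := Nat.dvd_gcd h2 h1
      have h6 : Nat.gcd (m ^ 2) (n ^ 2) = 1 := Nat.Coprime.pow 2 2 hcmn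
      rw [h6] at h5
      exact Nat.dvd_one.mp h5
    have cx2 : Nat.Coprime x 2 := by
      rw [Nat.coprime_comm]
      exact (Nat.Prime.coprime_iff_not_dvd Nat.prime_two).mpr (by omega)
    have cx4 : Nat.Coprime x 4 := by
      rw [show (4 : ℕ) = 2 * 2 by norm_num]
      exact Nat.Coprime.mul_right cx2 cx2
    have cxall : Nat.Coprime x (4 * (m * n)) :=
      Nat.Coprime.mul_right cx4 (Nat.Coprime.mul_right cxm cxn)
    obtain ⟨P, Q, hQ0, hQP, hPQcop, hxPQ, hyPQ, hzPQ⟩ :=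
      pyth_nat x (4 * (m * n)) k hx0 (by positivity) heqn cxall hxodd
    have heq2 : P ^ 2 + n ^ 2 = m ^ 2 + Q ^ 2 := by omega
    have hprod2 : P * Q = 2 * (m * n) := by omega
    exact no_system (m * n) P Q m n le_rfl (by omega) hQ0 hm hn hPQcop hcmn heq2 hprod2
  refine ⟨main, ?_⟩
  have hns : ¬ IsSquare (m ^ 4 + 14 * m ^ 2 * n ^ 2 + n ^ 4 : ℕ) := by
    rintro ⟨r, hr⟩
    exact main ⟨r, by rw [hr]; ring⟩
  have hirr := irrational_sqrt_natCast_iff.mpr hns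
  have ecast : ((m ^ 4 + 14 * m ^ 2 * n ^ 2 + n ^ 4 : ℕ) : ℝ) =
      (m : ℝ) ^ 4 + 14 * (m : ℝ) ^ 2 * (n : ℝ) ^ 2 + (n : ℝ) ^ 4 := by
    push_cast
    ring
  rwa [ecast] at hirr
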